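/- Suppose condition (B_p) holds for some p > 2 and condition (Q_∞) holds. Let N(n) = max{k : τ_k ≤ n}. Then, as n → ∞, n^{−1/2} |X_n − X_{τ_{N(n)}}| → 0 in probability. -/

import Mathlib

open MeasureTheory Filter Topology Asymptotics
open scoped ENNReal NNReal

/-- A time-homogeneous Markov chain on a measurable state space `E`, encoded via the family
`P z` of laws (on trajectory space) of the chain started at `z`.  The field `markov` is the
time-homogeneous Markov property: conditionally on the event `{ω n = w}` intersected with any
event `B` depending only on the first `n+1` coordinates, the shifted trajectory has law `P w`. -/
structure MChain (E : Type*) [MeasurableSpace E] where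
  P : E → MeasureTheory.Measure (ℕ → E)
  isProb : ∀ z, MeasureTheory.IsProbabilityMeasure (P z)
  init : ∀ z, P z {ω | ω 0 = z} = 1
  markov : ∀ (z : E) (n : ℕ) (w : E) (A B : Set (ℕ → E)), MeasurableSet A →
    (∀ ω ω' : ℕ → E, (∀ k, k ≤ n → ω k = ω' k) → ω ∈ B → ω' ∈ B) →
    P z (B ∩ {ω | ω n = w} ∩ {ω | (fun k => ω (n + k)) ∈ A})
      = P z (B ∩ {ω | ω n = w}) * P w A

namespace MChain

variable {E : Type*} [MeasurableSpace E]

/-- Irreducibility: every state can be reached from every state with positive probability. -/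
def Irreducible (X : MChain E) : Prop := ∀ z w : E, ∃ n : ℕ, X.P z {ω | ω n = w} ≠ 0

/-- Recurrence: from every state, the chain returns to it almost surely. -/
def Recurrent (X : MChain E) : Prop := ∀ z : E, X.P z {ω | ∃ n, 1 ≤ n ∧ ω n = z} = 1

def Transient (X : MChain E) : Prop := ¬ X.Recurrent

/-- The first return time to `z` (with junk value `0`, via `sInf ∅ = 0`, if there is no return). -/
noncomputable def returnTime (z : E) (ω : ℕ → E) : ℕ := sInf {n | 1 ≤ n ∧ ω n = z}

/-- Positive recurrence: recurrent, with finite mean return times. -/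
def PositiveRecurrent (X : MChain E) : Prop :=
  X.Recurrent ∧ ∀ z : E, (∫⁻ ω, (returnTime z ω : ℝ≥0∞) ∂(X.P z)) ≠ ⊤

def NullRecurrent (X : MChain E) : Prop := X.Recurrent ∧ ¬ X.PositiveRecurrent

end MChain

section HalfStrip

variable {S : Type*} [Fintype S] [DecidableEq S] [Nonempty S]
  [MeasurableSpace S] [MeasurableSingletonClass S]

/-- `qhat X x i j` is the probability that the `S`-coordinate moves from `i` to `j` when the
`ℕ`-coordinate is at `x`; this is `q_x(i,j) = Σ_y p(x,i,y,j)` of the paper. -/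
noncomputable def qhat (X : MChain (ℕ × S)) (x : ℕ) (i j : S) : ℝ :=
  (X.P (x, i) {ω | (ω 1).2 = j}).toReal

/-- `stepMoment X k x i = μ_k(x,i) = E[(X_{n+1}-X_n)^k | X_n = x, η_n = i]`. -/
noncomputable def stepMoment (X : MChain (ℕ × S)) (k : ℕ) (x : ℕ) (i : S) : ℝ :=
  ∫ ω, (((ω 1).1 : ℝ) - (x : ℝ)) ^ k ∂(X.P (x, i))

/-- Condition (B_p): uniformly bounded conditional `p`-th moments of the jumps of the
`ℕ`-coordinate (by the Markov property, the conditional moment given `F_n` is a function of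
the current state only). -/
def CondB (X : MChain (ℕ × S)) (p : ℝ) : Prop :=
  ∃ C : ℝ≥0∞, C ≠ ⊤ ∧ ∀ (x : ℕ) (i : S),
    (∫⁻ ω, ENNReal.ofReal (|((ω 1).1 : ℝ) - (x : ℝ)| ^ p) ∂(X.P (x, i))) ≤ C

def IsStochasticMatrix (Q : S → S → ℝ) : Prop :=
  (∀ i j, 0 ≤ Q i j) ∧ ∀ i, (∑ j, Q i j) = 1

def IsIrreducibleMatrix (Q : S → S → ℝ) : Prop :=
  ∀ i j, ∃ n : ℕ, 0 < ((Matrix.of Q) ^ n) i j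

/-- Aperiodicity (for a finite irreducible stochastic matrix, eventual positivity of the
diagonal entries of the powers is equivalent to aperiodicity). -/
def IsAperiodicMatrix (Q : S → S → ℝ) : Prop :=
  ∀ i, ∃ N : ℕ, ∀ n, N ≤ n → 0 < ((Matrix.of Q) ^ n) i i

/-- `pst` is a (strictly positive) stationary distribution for `Q`. -/
def IsStationaryDist (Q : S → S → ℝ) (pst : S → ℝ) : Prop :=
  (∀ i, 0 < pst i) ∧ (∑ i, pst i) = 1 ∧ ∀ j, (∑ i, pst i * Q i j) = pst j

/-- Condition (Q_∞): the transition matrix of the `S`-coordinate converges as `x → ∞` to an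
irreducible stochastic matrix `Q`. -/
def CondQ (X : MChain (ℕ × S)) (Q : S → S → ℝ) : Prop :=
  (∀ i j, Tendsto (fun x : ℕ => qhat X x i j) atTop (nhds (Q i j))) ∧
    IsStochasticMatrix Q ∧ IsIrreducibleMatrix Q

/-- Condition (Q_∞^+): as (Q_∞), with a power-law rate of convergence. -/
def CondQplus (X : MChain (ℕ × S)) (Q : S → S → ℝ) : Prop :=
  (∃ δ₀ : ℝ, 0 < δ₀ ∧ ∀ i j,
      (fun x : ℕ => qhat X x i j - Q i j) =O[atTop] fun x : ℕ => (x : ℝ) ^ (-δ₀)) ∧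
    IsStochasticMatrix Q ∧ IsIrreducibleMatrix Q

/-- Condition (M_C): asymptotically constant drifts, `μ₁(x,i) = d_i + o(1)`. -/
def CondMC (X : MChain (ℕ × S)) (d : S → ℝ) : Prop :=
  ∀ i, Tendsto (fun x : ℕ => stepMoment X 1 x i) atTop (nhds (d i))

/-- Condition (M_L): Lamperti-type drifts, `μ₁(x,i) = c_i/x + o(1/x)`, `μ₂(x,i) = s_i² + o(1)`,
with at least one `s_i²` nonzero. -/
def CondML (X : MChain (ℕ × S)) (c s2 : S → ℝ) : Prop :=
  (∀ i, 0 ≤ s2 i) ∧ (∃ i, s2 i ≠ 0) ∧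
    (∀ i, Tendsto (fun x : ℕ => (x : ℝ) * stepMoment X 1 x i) atTop (nhds (c i))) ∧
    (∀ i, Tendsto (fun x : ℕ => stepMoment X 2 x i) atTop (nhds (s2 i)))

/-- Condition (M_L^+): Lamperti-type drifts with power-law error bounds. -/
def CondMLplus (X : MChain (ℕ × S)) (c s2 : S → ℝ) : Prop :=
  (∀ i, 0 ≤ s2 i) ∧ (∃ i, s2 i ≠ 0) ∧
    ∃ δ₁ : ℝ, 0 < δ₁ ∧ ∀ i,
      ((fun x : ℕ => stepMoment X 1 x i - c i / (x : ℝ)) =O[atTop]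
        fun x : ℕ => (x : ℝ) ^ (-1 - δ₁)) ∧
      ((fun x : ℕ => stepMoment X 2 x i - s2 i) =O[atTop] fun x : ℕ => (x : ℝ) ^ (-δ₁))

/-- Successive visit times `τ_0 < τ_1 < ⋯` of the `S`-coordinate to the distinguished state
`s0` (junk value, via `sInf ∅ = 0`, if there is no such visit). -/
noncomputable def tauSeq (s0 : S) (ω : ℕ → ℕ × S) : ℕ → ℕ
  | 0 => sInf {n | (ω n).2 = s0}
  | m + 1 => sInf {n | tauSeq s0 ω m < n ∧ (ω n).2 = s0}

/-- `τ`, the first positive time at which the `S`-coordinate visits `s0`. -/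
noncomputable def tauRet (s0 : S) (ω : ℕ → ℕ × S) : ℕ :=
  sInf {n | 1 ≤ n ∧ (ω n).2 = s0}

/-- `D_n`, the maximal displacement of the `ℕ`-coordinate during the `n`-th excursion. -/
noncomputable def Dexc (s0 : S) (n : ℕ) (ω : ℕ → ℕ × S) : ℕ :=
  Finset.sup (Finset.Icc (tauSeq s0 ω n) (tauSeq s0 ω (n + 1)))
    fun m => Nat.dist (ω m).1 (ω (tauSeq s0 ω n)).1

/-- `N(n) = max {k : τ_k ≤ n}`. -/
noncomputable def Ncount (s0 : S) (n : ℕ) (ω : ℕ → ℕ × S) : ℕ :=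
  sSup {k | tauSeq s0 ω k ≤ n}

end HalfStrip

/-- `Fdist a t` is the distribution function of the square root of a `Gamma(a,t)` random
variable: `F_{a,t}(x) = ∫_0^x 2 u^{2a-1} e^{-u²/t} / (t^a Γ(a)) du`. -/
noncomputable def Fdist (a t x : ℝ) : ℝ :=
  ∫ u in (0:ℝ)..x, 2 * u ^ (2 * a - 1) * Real.exp (-(u ^ 2) / t) / (t ^ a * Real.Gamma a)

variable {S : Type*} [Fintype S] [DecidableEq S] [Nonempty S]
  [MeasurableSpace S] [MeasurableSingletonClass S]

namespace Stmt18Aux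
set_option linter.unusedSectionVars false

variable {S : Type*} [Fintype S] [DecidableEq S] [Nonempty S]
  [MeasurableSpace S] [MeasurableSingletonClass S]

lemma meas_eval (n : ℕ) : Measurable fun ω : ℕ → ℕ × S => ω n := measurable_pi_apply n

lemma measSet_eq (n : ℕ) (w : ℕ × S) : MeasurableSet {ω : ℕ → ℕ × S | ω n = w} :=
  (meas_eval n) (measurableSet_singleton w)

lemma measSet_snd (n : ℕ) (j : S) : MeasurableSet {ω : ℕ → ℕ × S | (ω n).2 = j} :=
  (measurable_snd.comp (meas_eval n)) (measurableSet_singleton j)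

/-- The hitting event of `s0` at some time `k ∈ [1, L]`. -/
def Hit (s0 : S) (L : ℕ) : Set (ℕ → ℕ × S) := {ω | ∃ k, 1 ≤ k ∧ k ≤ L ∧ (ω k).2 = s0}

lemma measSet_hit (s0 : S) (L : ℕ) : MeasurableSet (Hit s0 L) := by
  have : Hit s0 L = ⋃ k ∈ Set.Icc 1 L, {ω : ℕ → ℕ × S | (ω k).2 = s0} := by
    ext ω; simp [Hit, Set.mem_Icc, and_assoc]
  rw [this]
  exact MeasurableSet.biUnion (Set.to_countable _) fun k _ => measSet_snd k s0

lemma meas_shift (n : ℕ) : Measurable fun (ω : ℕ → ℕ × S) (k : ℕ) => ω (n + k) :=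
  measurable_pi_lambda _ fun k => measurable_pi_apply (n + k)

lemma markov_univ (X : MChain (ℕ × S)) (z w : ℕ × S) (n : ℕ) (A : Set (ℕ → ℕ × S))
    (hA : MeasurableSet A) :
    X.P z ({ω | ω n = w} ∩ {ω | (fun k => ω (n + k)) ∈ A})
      = X.P z {ω | ω n = w} * X.P w A := by
  have := X.markov z n w A Set.univ hA (by intro ω ω' _ h; trivial)
  simpa using this

/-- Decomposition at time `n` over the state `w` there, with a past event `B` and
future events `A w`. -/
lemma decomp (X : MChain (ℕ × S)) (z : ℕ × S) (n : ℕ) (B : Set (ℕ → ℕ × S))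
    (hB : MeasurableSet B)
    (hBdep : ∀ ω ω' : ℕ → ℕ × S, (∀ k, k ≤ n → ω k = ω' k) → ω ∈ B → ω' ∈ B)
    (A : (ℕ × S) → Set (ℕ → ℕ × S)) (hA : ∀ w, MeasurableSet (A w)) :
    X.P z (⋃ w, B ∩ {ω | ω n = w} ∩ {ω | (fun k => ω (n + k)) ∈ A w})
      = ∑' w, X.P z (B ∩ {ω | ω n = w}) * X.P w (A w) := by
  rw [measure_iUnion]
  · exact tsum_congr fun w => X.markov z n w (A w) B (hA w) hBdep
  · intro v w hvw
    refine Set.disjoint_left.2 fun ω hv hw => hvw ?_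
    have h1 : ω n = v := hv.1.2
    have h2 : ω n = w := hw.1.2
    rw [← h1, h2]
  · intro w
    exact ((hB.inter (measSet_eq n w)).inter ((meas_shift n) (hA w)))

lemma tsum_state_le (X : MChain (ℕ × S)) (z : ℕ × S) (n : ℕ) (B : Set (ℕ → ℕ × S))
    (hB : MeasurableSet B) :
    ∑' w, X.P z (B ∩ {ω | ω n = w}) ≤ X.P z B := by
  have := X.isProb z
  rw [← measure_iUnion]
  · exact measure_mono (by intro ω h; simp only [Set.mem_iUnion] at h; exact h.choose_spec.1)
  · intro v w hvw
    refine Set.disjoint_left.2 fun ω hv hw => hvw ?_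
    rw [← hv.2, hw.2]
  · exact fun w => hB.inter (measSet_eq n w)

/-- Upper bound: if every future event has probability at most `c`, the combined event
has probability at most `c * P B`. -/
lemma decomp_le (X : MChain (ℕ × S)) (z : ℕ × S) (n : ℕ) (B : Set (ℕ → ℕ × S))
    (hB : MeasurableSet B)
    (hBdep : ∀ ω ω' : ℕ → ℕ × S, (∀ k, k ≤ n → ω k = ω' k) → ω ∈ B → ω' ∈ B)
    (A : (ℕ × S) → Set (ℕ → ℕ × S)) (hA : ∀ w, MeasurableSet (A w))
    (c : ℝ≥0∞) (hc : ∀ w, X.P w (A w) ≤ c) :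
    X.P z (⋃ w, B ∩ {ω | ω n = w} ∩ {ω | (fun k => ω (n + k)) ∈ A w})
      ≤ c * X.P z B := by
  rw [decomp X z n B hB hBdep A hA]
  calc ∑' w, X.P z (B ∩ {ω | ω n = w}) * X.P w (A w)
      ≤ ∑' w, c * X.P z (B ∩ {ω | ω n = w}) := by
        refine ENNReal.tsum_le_tsum fun w => ?_
        rw [mul_comm ((X.P z) (B ∩ {ω | ω n = w}))]
        exact mul_le_mul_left (hc w) _
    _ = c * ∑' w, X.P z (B ∩ {ω | ω n = w}) := ENNReal.tsum_mul_left
    _ ≤ c * X.P z B := mul_le_mul_right (tsum_state_le X z n B hB) _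

end Stmt18Aux

namespace Stmt18Aux
set_option linter.unusedSectionVars false

variable {S : Type*} [Fintype S] [DecidableEq S] [Nonempty S]
  [MeasurableSpace S] [MeasurableSingletonClass S]

lemma natDist_cast_real (x y : ℕ) : (Nat.dist x y : ℝ) = |(x:ℝ) - (y:ℝ)| := by
  rcases le_total x y with h | h
  · rw [Nat.dist_eq_sub_of_le h, Nat.cast_sub h, abs_sub_comm,
      abs_of_nonneg (sub_nonneg.2 ((Nat.cast_le (α := ℝ)).2 h))]
  · rw [Nat.dist_eq_sub_of_le_right h, Nat.cast_sub h,
      abs_of_nonneg (sub_nonneg.2 ((Nat.cast_le (α := ℝ)).2 h))]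

section Cheb
variable (X : MChain (ℕ × S)) {p : ℝ} (hp : 0 < p) {C : ℝ≥0∞} (hCtop : C ≠ ⊤)
  (hC : ∀ (x : ℕ) (i : S),
    (∫⁻ ω, ENNReal.ofReal (|((ω 1).1 : ℝ) - (x : ℝ)| ^ p) ∂(X.P (x, i))) ≤ C)

include hp hC in
/-- One-step Chebyshev estimate. -/
lemma cheb_one (w : ℕ × S) {t : ℝ} (ht : 0 < t) :
    X.P w {ω | t ≤ |((ω 1).1 : ℝ) - (w.1 : ℝ)|} ≤ C / ENNReal.ofReal (t ^ p) := by
  set f : (ℕ → ℕ × S) → ℝ≥0∞ := fun ω => ENNReal.ofReal (|((ω 1).1 : ℝ) - (w.1 : ℝ)| ^ p)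
  have hfm : Measurable f := by
    have h2 : Measurable fun v : ℕ × S => ENNReal.ofReal (|((v.1 : ℝ)) - (w.1 : ℝ)| ^ p) :=
      measurable_of_countable _
    exact h2.comp (meas_eval 1)
  have hsub : {ω : ℕ → ℕ × S | t ≤ |((ω 1).1 : ℝ) - (w.1 : ℝ)|}
      ⊆ {ω | ENNReal.ofReal (t ^ p) ≤ f ω} := by
    intro ω hω
    exact ENNReal.ofReal_le_ofReal (Real.rpow_le_rpow ht.le hω hp.le)
  have hmul := mul_meas_ge_le_lintegral₀ (μ := X.P w) hfm.aemeasurable (ENNReal.ofReal (t ^ p))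
  have hle : ENNReal.ofReal (t ^ p) * X.P w {ω | t ≤ |((ω 1).1 : ℝ) - (w.1 : ℝ)|} ≤ C := by
    refine le_trans (le_trans (mul_le_mul_right (measure_mono hsub) _) hmul) ?_
    obtain ⟨x, i⟩ := w
    exact hC x i
  have hne : ENNReal.ofReal (t ^ p) ≠ 0 := by
    simp [ENNReal.ofReal_eq_zero, not_le, Real.rpow_pos_of_pos ht]
  rw [ENNReal.le_div_iff_mul_le (Or.inl hne) (Or.inl ENNReal.ofReal_ne_top)]
  rwa [mul_comm]

include hp hC in
/-- Chebyshev estimate for a single step at time `k`, from any starting point. -/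
lemma cheb_step (z : ℕ × S) (k : ℕ) {t : ℝ} (ht : 0 < t) :
    X.P z {ω | t ≤ |((ω (k + 1)).1 : ℝ) - ((ω k).1 : ℝ)|} ≤ C / ENNReal.ofReal (t ^ p) := by
  have hprob := X.isProb z
  set A : (ℕ × S) → Set (ℕ → ℕ × S) := fun w => {ω' | t ≤ |((ω' 1).1 : ℝ) - (w.1 : ℝ)|}
  have hA : ∀ w, MeasurableSet (A w) := fun w =>
    (meas_eval (S := S) 1) ((Set.to_countable {v : ℕ × S | t ≤ |((v.1 : ℝ)) - (w.1 : ℝ)|}).measurableSet)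
  have hev : {ω : ℕ → ℕ × S | t ≤ |((ω (k + 1)).1 : ℝ) - ((ω k).1 : ℝ)|}
      = ⋃ w, Set.univ ∩ {ω | ω k = w} ∩ {ω | (fun j => ω (k + j)) ∈ A w} := by
    ext ω
    simp only [Set.mem_iUnion, Set.univ_inter, Set.mem_inter_iff, Set.mem_setOf_eq, A]
    constructor
    · intro h; exact ⟨ω k, rfl, h⟩
    · rintro ⟨w, hw, h⟩; rw [hw]; exact h
  rw [hev]
  have hle := decomp_le X z k Set.univ MeasurableSet.univ (fun _ _ _ h => h) A hA
    (C / ENNReal.ofReal (t ^ p)) (fun w => cheb_one X hp hC w ht)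
  simpa [measure_univ] using hle

include hp hC in
/-- Displacement estimate over `j` steps ending at time `n`. -/
lemma cheb_displacement (z : ℕ × S) (n j : ℕ) (hj1 : 1 ≤ j) (hjn : j ≤ n) {t : ℝ}
    (ht : 0 < t) :
    X.P z {ω | t ≤ (Nat.dist (ω n).1 (ω (n - j)).1 : ℝ)}
      ≤ j * (C / ENNReal.ofReal ((t / j) ^ p)) := by
  have hj0 : (0:ℝ) < j := by exact_mod_cast hj1
  have htj : 0 < t / j := div_pos ht hj0
  have hsub : {ω : ℕ → ℕ × S | t ≤ (Nat.dist (ω n).1 (ω (n - j)).1 : ℝ)}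
      ⊆ ⋃ i ∈ Finset.range j,
        {ω : ℕ → ℕ × S | t / j ≤ |((ω (n - j + i + 1)).1 : ℝ) - ((ω (n - j + i)).1 : ℝ)|} := by
    intro ω hω
    by_contra hcon
    simp only [Set.mem_iUnion, Set.mem_setOf_eq, not_exists, not_le, Finset.mem_range] at hcon
    set f : ℕ → ℝ := fun i => ((ω (n - j + i)).1 : ℝ) with hf
    have tele : f j - f 0 = ∑ i ∈ Finset.range j, (f (i + 1) - f i) :=
      (Finset.sum_range_sub f j).symm
    have habs : |f j - f 0| < t := by
      rw [tele]
      calc |∑ i ∈ Finset.range j, (f (i + 1) - f i)|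
          ≤ ∑ i ∈ Finset.range j, |f (i + 1) - f i| := Finset.abs_sum_le_sum_abs _ _
        _ < ∑ _i ∈ Finset.range j, (t / j) := by
            refine Finset.sum_lt_sum_of_nonempty ⟨0, Finset.mem_range.2 hj1⟩ fun i hi => ?_
            exact hcon i (Finset.mem_range.1 hi)
        _ = t := by
            rw [Finset.sum_const, Finset.card_range, nsmul_eq_mul]
            field_simp
    have hfj : f j = ((ω n).1 : ℝ) := by rw [hf]; simp [Nat.sub_add_cancel hjn]
    have hf0 : f 0 = ((ω (n - j)).1 : ℝ) := by rw [hf]; simp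
    rw [hfj, hf0] at habs
    rw [Set.mem_setOf_eq, natDist_cast_real] at hω
    linarith
  refine le_trans (measure_mono hsub) ?_
  refine le_trans (measure_biUnion_finset_le _ _) ?_
  have hstep : ∀ i ∈ Finset.range j,
      X.P z {ω : ℕ → ℕ × S | t / j ≤ |((ω (n - j + i + 1)).1 : ℝ) - ((ω (n - j + i)).1 : ℝ)|}
        ≤ C / ENNReal.ofReal ((t / j) ^ p) := fun i _ => cheb_step X hp hC z (n - j + i) htj
  refine le_trans (Finset.sum_le_sum hstep) ?_
  simp [Finset.sum_const, Finset.card_range, nsmul_eq_mul]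
end Cheb

end Stmt18Aux

namespace Stmt18Aux
set_option linter.unusedSectionVars false

variable {S : Type*} [Fintype S] [DecidableEq S] [Nonempty S]
  [MeasurableSpace S] [MeasurableSingletonClass S]

section Tau
variable {s0 : S} {ω : ℕ → ℕ × S} (hio : ∀ N, ∃ k, N < k ∧ (ω k).2 = s0)

include hio

lemma tau_succ_mem (k : ℕ) :
    tauSeq s0 ω k < tauSeq s0 ω (k + 1) ∧ (ω (tauSeq s0 ω (k + 1))).2 = s0 := by
  have hne : Set.Nonempty {n | tauSeq s0 ω k < n ∧ (ω n).2 = s0} := by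
    obtain ⟨m, hm1, hm2⟩ := hio (tauSeq s0 ω k)
    exact ⟨m, hm1, hm2⟩
  have := Nat.sInf_mem hne
  exact this

lemma tau_strictMono : StrictMono (tauSeq s0 ω) :=
  strictMono_nat_of_lt_succ fun k => (tau_succ_mem hio k).1

lemma tau_surj {t : ℕ} (ht : (ω t).2 = s0) : ∃ k, tauSeq s0 ω k = t := by
  induction t using Nat.strong_induction_on with
  | _ t IH =>
    classical
    have hne : Set.Nonempty {n | (ω n).2 = s0} := ⟨t, ht⟩
    by_cases h0 : t = sInf {n | (ω n).2 = s0}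
    · exact ⟨0, h0.symm⟩
    · have hle : sInf {n | (ω n).2 = s0} ≤ t := Nat.sInf_le ht
      have hlt : sInf {n | (ω n).2 = s0} < t := lt_of_le_of_ne hle (Ne.symm h0)
      have ht1 : 1 ≤ t := Nat.one_le_iff_ne_zero.2 (by omega)
      have hdec : DecidablePred fun u => (ω u).2 = s0 := fun _ => inferInstance
      let t' := Nat.findGreatest (fun u => (ω u).2 = s0) (t - 1)
      have hPt' : (ω t').2 = s0 := Nat.findGreatest_spec (m := sInf {n | (ω n).2 = s0})
        (by omega) (Nat.sInf_mem hne)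
      have ht'le : t' ≤ t - 1 := Nat.findGreatest_le _
      have ht'lt : t' < t := by omega
      obtain ⟨k, hk⟩ := IH t' ht'lt hPt'
      refine ⟨k + 1, ?_⟩
      have hmem : t ∈ {n | tauSeq s0 ω k < n ∧ (ω n).2 = s0} := by
        constructor
        · rw [hk]; exact ht'lt
        · exact ht
      have hleast : ∀ u ∈ {n | tauSeq s0 ω k < n ∧ (ω n).2 = s0}, t ≤ u := by
        rintro u ⟨hu1, hu2⟩
        by_contra hcon
        push_neg at hcon
        have hu' : t' < u := by rw [← hk]; exact hu1
        exact Nat.findGreatest_is_greatest hu' (by omega) hu2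
      show sInf {n | tauSeq s0 ω k < n ∧ (ω n).2 = s0} = t
      exact le_antisymm (Nat.sInf_le hmem) (hleast _ (Nat.sInf_mem ⟨t, hmem⟩))

lemma tau_window {a n t : ℕ} (hat : a < t) (htn : t ≤ n) (hvt : (ω t).2 = s0) :
    a < tauSeq s0 ω (Ncount s0 n ω) ∧ tauSeq s0 ω (Ncount s0 n ω) ≤ n := by
  obtain ⟨k, hk⟩ := tau_surj hio hvt
  have hsm : StrictMono (tauSeq s0 ω) := tau_strictMono hio
  have hbdd : BddAbove {m | tauSeq s0 ω m ≤ n} :=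
    ⟨n, fun m hm => le_trans hsm.le_apply hm⟩
  have hne : k ∈ {m | tauSeq s0 ω m ≤ n} := by rw [Set.mem_setOf_eq, hk]; exact htn
  have hmem := Nat.sSup_mem ⟨k, hne⟩ hbdd
  have hkle : k ≤ sSup {m | tauSeq s0 ω m ≤ n} := le_csSup hbdd hne
  have hNdef : Ncount s0 n ω = sSup {m | tauSeq s0 ω m ≤ n} := rfl
  constructor
  · rw [hNdef]
    calc a < t := hat
      _ = tauSeq s0 ω k := hk.symm
      _ ≤ tauSeq s0 ω (sSup {m | tauSeq s0 ω m ≤ n}) := hsm.monotone hkle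
  · rw [hNdef]; exact hmem

end Tau
end Stmt18Aux

namespace Stmt18Aux
set_option linter.unusedSectionVars false

variable {S : Type*} [Fintype S] [DecidableEq S] [Nonempty S]
  [MeasurableSpace S] [MeasurableSingletonClass S]

section MatrixPath
variable {Q : S → S → ℝ}

lemma matrix_pow_nonneg (hQ : ∀ i j, 0 ≤ Q i j) (n : ℕ) :
    ∀ i j, 0 ≤ ((Matrix.of Q) ^ n) i j := by
  induction n with
  | zero => intro i j; rw [pow_zero, Matrix.one_apply]; split <;> norm_num
  | succ n IH =>
    intro i j
    rw [pow_succ, Matrix.mul_apply]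
    exact Finset.sum_nonneg fun k _ => mul_nonneg (IH i k) (hQ k j)

lemma pow_pos_path (hQ : ∀ i j, 0 ≤ Q i j) :
    ∀ (n : ℕ) (a b : S), 0 < ((Matrix.of Q) ^ n) a b →
      ∃ f : ℕ → S, f 0 = a ∧ f n = b ∧ ∀ l < n, 0 < Q (f l) (f (l + 1)) := by
  intro n
  induction n with
  | zero =>
    intro a b h
    rw [pow_zero, Matrix.one_apply] at h
    by_cases hab : a = b
    · exact ⟨fun _ => a, rfl, hab, by omega⟩
    · simp [hab] at h
  | succ n IH =>
    intro a b h
    rw [pow_succ', Matrix.mul_apply] at h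
    have hex : ∃ k, 0 < Matrix.of Q a k * ((Matrix.of Q) ^ n) k b := by
      by_contra hcon
      push_neg at hcon
      have : (∑ k, Matrix.of Q a k * ((Matrix.of Q) ^ n) k b) ≤ 0 :=
        Finset.sum_nonpos fun k _ => hcon k
      linarith
    obtain ⟨k, hk⟩ := hex
    have hk1 : 0 < Matrix.of Q a k := by
      rcases lt_or_eq_of_le (hQ a k) with h' | h'
      · exact h'
      · rw [Matrix.of_apply] at hk ⊢; rw [← h'] at hk; simp at hk
    have hk2 : 0 < ((Matrix.of Q) ^ n) k b := by
      by_contra h'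
      push_neg at h'
      have := matrix_pow_nonneg hQ n k b
      have hz : ((Matrix.of Q) ^ n) k b = 0 := le_antisymm h' this
      rw [hz, mul_zero] at hk; exact lt_irrefl 0 hk
    obtain ⟨g, hg0, hgn, hgstep⟩ := IH k b hk2
    refine ⟨fun l => if l = 0 then a else g (l - 1), by simp, by simp [hgn], ?_⟩
    intro l hl
    rcases Nat.eq_zero_or_pos l with h0 | h0
    · subst h0
      simpa [hg0] using hk1
    · have h1 : l ≠ 0 := by omega
      have h2 : l + 1 ≠ 0 := by omega
      simp only [h1, h2, if_false]
      have : l - 1 + 1 = l + 1 - 1 := by omega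
      have hstep := hgstep (l - 1) (by omega)
      rw [this] at hstep
      exact hstep

lemma exists_path_to (hQs : IsStochasticMatrix Q) (hQi : IsIrreducibleMatrix Q) (s0 i : S) :
    ∃ r, 1 ≤ r ∧ ∃ f : ℕ → S, f 0 = i ∧ f r = s0 ∧ ∀ l < r, 0 < Q (f l) (f (l + 1)) := by
  obtain ⟨hQ0, hQ1⟩ := hQs
  obtain ⟨n, hn⟩ := hQi i s0
  rcases Nat.eq_zero_or_pos n with h0 | hpos
  · subst h0
    rw [pow_zero, Matrix.one_apply] at hn
    have his0 : i = s0 := by by_contra h'; simp [h'] at hn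
    subst his0
    by_cases hsing : ∀ j : S, j = i
    · refine ⟨1, le_refl 1, fun _ => i, rfl, rfl, ?_⟩
      intro l _
      by_contra hcon
      push_neg at hcon
      have hQii : Q i i ≤ 0 := hcon
      have hsum : (∑ j, Q i j) ≤ 0 :=
        Finset.sum_nonpos fun j _ => by rw [hsing j]; exact hQii
      rw [hQ1 i] at hsum; linarith
    · push_neg at hsing
      obtain ⟨j, hj⟩ := hsing
      obtain ⟨n1, hn1⟩ := hQi i j
      obtain ⟨n2, hn2⟩ := hQi j i
      have hn1pos : 1 ≤ n1 := by
        rcases Nat.eq_zero_or_pos n1 with h' | h'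
        · subst h'; rw [pow_zero, Matrix.one_apply] at hn1
          exfalso
          by_cases hij : i = j
          · exact hj hij.symm
          · simp [hij] at hn1
        · exact h'
      have hmul : 0 < ((Matrix.of Q) ^ (n1 + n2)) i i := by
        rw [pow_add, Matrix.mul_apply]
        have hterm : 0 < ((Matrix.of Q) ^ n1) i j * ((Matrix.of Q) ^ n2) j i :=
          mul_pos hn1 hn2
        refine lt_of_lt_of_le hterm ?_
        exact Finset.single_le_sum
          (fun k _ => mul_nonneg (matrix_pow_nonneg hQ0 n1 i k) (matrix_pow_nonneg hQ0 n2 k i))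
          (Finset.mem_univ j)
      obtain ⟨f, hf0, hfn, hfstep⟩ := pow_pos_path hQ0 (n1 + n2) i i hmul
      exact ⟨n1 + n2, by omega, f, hf0, hfn, hfstep⟩
  · obtain ⟨f, hf0, hfn, hfstep⟩ := pow_pos_path hQ0 n i s0 hn
    exact ⟨n, hpos, f, hf0, hfn, hfstep⟩

end MatrixPath
end Stmt18Aux

namespace Stmt18Aux
set_option linter.unusedSectionVars false

variable {S : Type*} [Fintype S] [DecidableEq S] [Nonempty S]
  [MeasurableSpace S] [MeasurableSingletonClass S]

lemma Hit_mono {s0 : S} {a b : ℕ} (h : a ≤ b) : Hit (S := S) s0 a ⊆ Hit s0 b :=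
  fun _ ⟨k, h1, h2, h3⟩ => ⟨k, h1, le_trans h2 h, h3⟩

section HitLemmas
variable (X : MChain (ℕ × S)) {p : ℝ} (hp : 0 < p) {C : ℝ≥0∞} (hCtop : C ≠ ⊤)
  (hC : ∀ (x : ℕ) (i : S),
    (∫⁻ ω, ENNReal.ofReal (|((ω 1).1 : ℝ) - (x : ℝ)| ^ p) ∂(X.P (x, i))) ≤ C)
  {Q : S → S → ℝ} (hQconv : ∀ i j, Tendsto (fun x : ℕ => qhat X x i j) atTop (nhds (Q i j)))
  {s0 : S}

include hp hCtop hC hQconv in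
lemma hit_of_path : ∀ r : ℕ, 1 ≤ r → ∀ f : ℕ → S, f r = s0 →
    (∀ l < r, 0 < Q (f l) (f (l + 1))) →
    ∃ δ : ℝ, 0 < δ ∧ ∃ X0 : ℕ, ∀ x, X0 ≤ x →
      ENNReal.ofReal δ ≤ X.P (x, f 0) (Hit s0 r) := by
  intro r
  induction r with
  | zero => omega
  | succ r IH =>
    intro _ f hfr hfstep
    rcases Nat.eq_zero_or_pos r with hr0 | hr1
    · -- base case r + 1 = 1
      subst hr0
      have hq : 0 < Q (f 0) s0 := by
        have := hfstep 0 (by omega); rwa [show f 1 = s0 from hfr] at this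
      have hev : ∀ᶠ x : ℕ in atTop, Q (f 0) s0 / 2 < qhat X x (f 0) s0 :=
        (hQconv (f 0) s0).eventually (eventually_gt_nhds (by linarith))
      obtain ⟨X0, hX0⟩ := Filter.eventually_atTop.1 hev
      refine ⟨Q (f 0) s0 / 2, by linarith, X0, fun x hx => ?_⟩
      have hprob := X.isProb (x, f 0)
      have h1 : ENNReal.ofReal (Q (f 0) s0 / 2) ≤ X.P (x, f 0) {ω | (ω 1).2 = s0} :=
        (ENNReal.ofReal_le_iff_le_toReal (measure_ne_top _ _)).2 (le_of_lt (hX0 x hx))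
      exact le_trans h1 (measure_mono (fun ω h => ⟨1, le_refl 1, le_refl 1, h⟩))
    · -- inductive step
      classical
      have hgr : (fun l => f (l + 1)) r = s0 := hfr
      have hgstep : ∀ l < r, 0 < Q ((fun l => f (l + 1)) l) ((fun l => f (l + 1)) (l + 1)) :=
        fun l hl => hfstep (l + 1) (by omega)
      obtain ⟨δ', hδ', X', hX'⟩ := IH hr1 (fun l => f (l + 1)) hgr hgstep
      have hqa_pos : 0 < Q (f 0) (f 1) := hfstep 0 (by omega)
      set qa := Q (f 0) (f 1) with hqa
      have hev1 : ∀ᶠ x : ℕ in atTop, qa / 2 < qhat X x (f 0) (f 1) :=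
        (hQconv (f 0) (f 1)).eventually (eventually_gt_nhds (by linarith))
      have htail : ∀ᶠ x : ℕ in atTop, C.toReal ≤ qa / 4 * ((x : ℝ) + -(X' : ℝ)) ^ p := by
        have h1 : Tendsto (fun x : ℕ => ((x : ℝ) + -(X' : ℝ))) atTop atTop :=
          tendsto_atTop_add_const_right _ _ tendsto_natCast_atTop_atTop
        have h2 : Tendsto (fun x : ℕ => ((x:ℝ) + -(X' : ℝ)) ^ p) atTop atTop :=
          (tendsto_rpow_atTop hp).comp h1
        exact (h2.const_mul_atTop (by linarith : (0:ℝ) < qa / 4)).eventually_ge_atTop _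
      obtain ⟨X1, hX1⟩ := Filter.eventually_atTop.1 (hev1.and htail)
      refine ⟨δ' * (qa / 4), by positivity, max X1 (X' + 1), fun x hx => ?_⟩
      have hxX1 : X1 ≤ x := le_trans (le_max_left _ _) hx
      have hxX' : X' + 1 ≤ x := le_trans (le_max_right _ _) hx
      obtain ⟨hq2, htailx⟩ := hX1 x hxX1
      have hprob := X.isProb (x, f 0)
      have hxp : (0:ℝ) < (x:ℝ) - X' := by
        have : ((X':ℝ) + 1) ≤ (x:ℝ) := by exact_mod_cast hxX'
        linarith
      -- tail probability bound
      have htp : X.P (x, f 0) {ω | (ω 1).1 < X'} ≤ ENNReal.ofReal (qa / 4) := by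
        have hsub : {ω : ℕ → ℕ × S | (ω 1).1 < X'}
            ⊆ {ω : ℕ → ℕ × S | ((x:ℝ) - X') ≤ |((ω 1).1 : ℝ) - (((x, f 0) : ℕ × S).1 : ℝ)|} := by
          intro ω hω
          have h1 : ((ω 1).1 : ℝ) < X' := by exact_mod_cast hω
          have h2 : ((ω 1).1 : ℝ) ≤ (x:ℝ) := by linarith
          simp only [Set.mem_setOf_eq]
          have h3 : (((x, f 0) : ℕ × S).1 : ℝ) = (x:ℝ) := rfl
          rw [h3, abs_sub_comm, abs_of_nonneg (by linarith : (0:ℝ) ≤ (x:ℝ) - ((ω 1).1 : ℝ))]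
          linarith
        refine le_trans (measure_mono hsub) ?_
        refine le_trans (cheb_one X hp hC (x, f 0) hxp) ?_
        rw [ENNReal.div_le_iff_le_mul
          (Or.inl (by simp [ENNReal.ofReal_eq_zero, not_le, Real.rpow_pos_of_pos hxp]))
          (Or.inl ENNReal.ofReal_ne_top)]
        rw [← ENNReal.ofReal_mul (by linarith : (0:ℝ) ≤ qa / 4)]
        refine (ENNReal.le_ofReal_iff_toReal_le hCtop (by positivity)).2 ?_
        have : ((x:ℝ) + -(X':ℝ)) = ((x:ℝ) - X') := by ring
        rw [← this]
        exact htailx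
      have hq2' : ENNReal.ofReal (qa / 2) ≤ X.P (x, f 0) {ω | (ω 1).2 = f 1} :=
        (ENNReal.ofReal_le_iff_le_toReal (measure_ne_top _ _)).2 (le_of_lt hq2)
      -- the good event
      have hGmeas : MeasurableSet {ω : ℕ → ℕ × S | (ω 1).2 = f 1 ∧ X' ≤ (ω 1).1} :=
        (meas_eval (S := S) 1) ((Set.to_countable {v : ℕ × S | v.2 = f 1 ∧ X' ≤ v.1}).measurableSet)
      have hsplit : X.P (x, f 0) {ω | (ω 1).2 = f 1}
          = X.P (x, f 0) {ω | (ω 1).2 = f 1 ∧ X' ≤ (ω 1).1}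
            + X.P (x, f 0) ({ω | (ω 1).2 = f 1} ∩ {ω | (ω 1).1 < X'}) := by
        rw [← measure_union]
        · congr 1
          ext ω
          simp only [Set.mem_union, Set.mem_inter_iff, Set.mem_setOf_eq]
          constructor
          · intro h
            rcases le_or_gt X' (ω 1).1 with h' | h'
            · exact Or.inl ⟨h, h'⟩
            · exact Or.inr ⟨h, h'⟩
          · rintro (⟨h, _⟩ | ⟨h, _⟩) <;> exact h
        · refine Set.disjoint_left.2 ?_
          rintro ω ⟨_, h1⟩ ⟨_, h2⟩
          simp only [Set.mem_setOf_eq] at h1 h2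
          omega
        · exact ((meas_eval (S := S) 1)
            ((Set.to_countable {v : ℕ × S | v.2 = f 1}).measurableSet)).inter
            ((meas_eval (S := S) 1)
            ((Set.to_countable {v : ℕ × S | v.1 < X'}).measurableSet))
      have hGge : ENNReal.ofReal (qa / 4) ≤ X.P (x, f 0) {ω | (ω 1).2 = f 1 ∧ X' ≤ (ω 1).1} := by
        have hkey : ENNReal.ofReal (qa / 4) + ENNReal.ofReal (qa / 4)
            ≤ X.P (x, f 0) {ω | (ω 1).2 = f 1 ∧ X' ≤ (ω 1).1} + ENNReal.ofReal (qa / 4) := by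
          calc ENNReal.ofReal (qa / 4) + ENNReal.ofReal (qa / 4)
              = ENNReal.ofReal (qa / 2) := by
                rw [← ENNReal.ofReal_add (by linarith) (by linarith)]; congr 1; ring
            _ ≤ X.P (x, f 0) {ω | (ω 1).2 = f 1} := hq2'
            _ = X.P (x, f 0) {ω | (ω 1).2 = f 1 ∧ X' ≤ (ω 1).1}
                + X.P (x, f 0) ({ω | (ω 1).2 = f 1} ∩ {ω | (ω 1).1 < X'}) := hsplit
            _ ≤ X.P (x, f 0) {ω | (ω 1).2 = f 1 ∧ X' ≤ (ω 1).1} + ENNReal.ofReal (qa / 4) := by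
                exact add_le_add_right (le_trans (measure_mono Set.inter_subset_right) htp) _
        exact (ENNReal.add_le_add_iff_right ENNReal.ofReal_ne_top).1 hkey
      -- decomposition
      set A : (ℕ × S) → Set (ℕ → ℕ × S) :=
        fun w => if w.2 = f 1 ∧ X' ≤ w.1 then Hit s0 r else ∅ with hA
      have hAmeas : ∀ w, MeasurableSet (A w) := by
        intro w
        show MeasurableSet (if w.2 = f 1 ∧ X' ≤ w.1 then Hit s0 r else ∅)
        by_cases hcond : w.2 = f 1 ∧ X' ≤ w.1
        · rw [if_pos hcond]; exact measSet_hit s0 r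
        · rw [if_neg hcond]; exact MeasurableSet.empty
      have hPA : ∀ w : ℕ × S, (w.2 = f 1 ∧ X' ≤ w.1) → ENNReal.ofReal δ' ≤ X.P w (A w) := by
        intro w hw
        have hAw : A w = Hit s0 r := if_pos hw
        rw [hAw]
        have hwp : w = (w.1, f 1) := by rw [← hw.1]
        rw [hwp]
        exact hX' w.1 hw.2
      have hdecomp := decomp X (x, f 0) 1 Set.univ MeasurableSet.univ
        (fun _ _ _ h => h) A hAmeas
      have hPG : X.P (x, f 0) {ω | (ω 1).2 = f 1 ∧ X' ≤ (ω 1).1}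
          = ∑' w : ℕ × S, (if w.2 = f 1 ∧ X' ≤ w.1
              then X.P (x, f 0) {ω | ω 1 = w} else 0) := by
        have hGeq : {ω : ℕ → ℕ × S | (ω 1).2 = f 1 ∧ X' ≤ (ω 1).1}
            = ⋃ w : ℕ × S, (if w.2 = f 1 ∧ X' ≤ w.1
                then {ω : ℕ → ℕ × S | ω 1 = w} else ∅) := by
          ext ω
          simp only [Set.mem_iUnion, Set.mem_setOf_eq]
          constructor
          · intro h
            exact ⟨ω 1, by rw [if_pos h]; exact rfl⟩
          · rintro ⟨w, hw⟩
            by_cases hcond : w.2 = f 1 ∧ X' ≤ w.1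
            · rw [if_pos hcond] at hw
              have : ω 1 = w := hw
              rw [this]; exact hcond
            · rw [if_neg hcond] at hw
              exact absurd hw (Set.notMem_empty ω)
        rw [hGeq, measure_iUnion]
        · refine tsum_congr fun w => ?_
          by_cases hcond : w.2 = f 1 ∧ X' ≤ w.1
          · rw [if_pos hcond, if_pos hcond]
          · rw [if_neg hcond, if_neg hcond, measure_empty]
        · intro v w hvw
          refine Set.disjoint_left.2 fun ω hv hw => hvw ?_
          have hv' : ω ∈ (if v.2 = f 1 ∧ X' ≤ v.1 then {ω : ℕ → ℕ × S | ω 1 = v} else ∅) := hv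
          have hw' : ω ∈ (if w.2 = f 1 ∧ X' ≤ w.1 then {ω : ℕ → ℕ × S | ω 1 = w} else ∅) := hw
          by_cases hcv : v.2 = f 1 ∧ X' ≤ v.1
          · by_cases hcw : w.2 = f 1 ∧ X' ≤ w.1
            · rw [if_pos hcv] at hv'; rw [if_pos hcw] at hw'
              have h1 : ω 1 = v := hv'
              have h2 : ω 1 = w := hw'
              rw [← h1, h2]
            · rw [if_neg hcw] at hw'; exact absurd hw' (Set.notMem_empty ω)
          · rw [if_neg hcv] at hv'; exact absurd hv' (Set.notMem_empty ω)
        · intro w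
          show MeasurableSet (if w.2 = f 1 ∧ X' ≤ w.1 then {ω : ℕ → ℕ × S | ω 1 = w} else ∅)
          by_cases hcond : w.2 = f 1 ∧ X' ≤ w.1
          · rw [if_pos hcond]; exact measSet_eq 1 w
          · rw [if_neg hcond]; exact MeasurableSet.empty
      have hunion_sub :
          (⋃ w : ℕ × S, Set.univ ∩ {ω | ω 1 = w} ∩ {ω | (fun k => ω (1 + k)) ∈ A w})
            ⊆ Hit s0 (r + 1) := by
        rintro ω hω
        simp only [Set.mem_iUnion, Set.univ_inter, Set.mem_inter_iff, Set.mem_setOf_eq] at hω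
        obtain ⟨w, _, hshift⟩ := hω
        have hshift' : (fun k => ω (1 + k)) ∈ (if w.2 = f 1 ∧ X' ≤ w.1 then Hit s0 r else ∅) :=
          hshift
        by_cases hcond : w.2 = f 1 ∧ X' ≤ w.1
        · rw [if_pos hcond] at hshift'
          obtain ⟨k, hk1, hk2, hk3⟩ := hshift'
          exact ⟨1 + k, by omega, by omega, hk3⟩
        · rw [if_neg hcond] at hshift'
          exact absurd hshift' (Set.notMem_empty _)
      calc ENNReal.ofReal (δ' * (qa / 4))
          = ENNReal.ofReal δ' * ENNReal.ofReal (qa / 4) := ENNReal.ofReal_mul hδ'.le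
        _ ≤ ENNReal.ofReal δ' * X.P (x, f 0) {ω | (ω 1).2 = f 1 ∧ X' ≤ (ω 1).1} :=
            mul_le_mul_right hGge _
        _ = ∑' w : ℕ × S, ENNReal.ofReal δ'
              * (if w.2 = f 1 ∧ X' ≤ w.1 then X.P (x, f 0) {ω | ω 1 = w} else 0) := by
            rw [hPG, ENNReal.tsum_mul_left]
        _ ≤ ∑' w : ℕ × S, X.P (x, f 0) (Set.univ ∩ {ω | ω 1 = w}) * X.P w (A w) := by
            refine ENNReal.tsum_le_tsum fun w => ?_
            by_cases hcond : w.2 = f 1 ∧ X' ≤ w.1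
            · rw [if_pos hcond, Set.univ_inter, mul_comm (ENNReal.ofReal δ')]
              exact mul_le_mul_right (hPA w hcond) _
            · rw [if_neg hcond, mul_zero]
              exact zero_le
        _ = X.P (x, f 0)
              (⋃ w : ℕ × S, Set.univ ∩ {ω | ω 1 = w} ∩ {ω | (fun k => ω (1 + k)) ∈ A w}) :=
            hdecomp.symm
        _ ≤ X.P (x, f 0) (Hit s0 (r + 1)) := measure_mono hunion_sub

end HitLemmas
end Stmt18Aux

namespace Stmt18Aux
set_option linter.unusedSectionVars false

variable {S : Type*} [Fintype S] [DecidableEq S] [Nonempty S]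
  [MeasurableSpace S] [MeasurableSingletonClass S]

section HitLemmas2
variable (X : MChain (ℕ × S)) {p : ℝ} (hp : 0 < p) {C : ℝ≥0∞} (hCtop : C ≠ ⊤)
  (hC : ∀ (x : ℕ) (i : S),
    (∫⁻ ω, ENNReal.ofReal (|((ω 1).1 : ℝ) - (x : ℝ)| ^ p) ∂(X.P (x, i))) ≤ C)
  {Q : S → S → ℝ} (hQconv : ∀ i j, Tendsto (fun x : ℕ => qhat X x i j) atTop (nhds (Q i j)))
  {s0 : S}

include hp hCtop hC hQconv in
lemma hit_large (hQs : IsStochasticMatrix Q) (hQi : IsIrreducibleMatrix Q) :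
    ∃ L, 1 ≤ L ∧ ∃ δ : ℝ, 0 < δ ∧ ∃ X0 : ℕ, ∀ i : S, ∀ x, X0 ≤ x →
      ENNReal.ofReal δ ≤ X.P (x, i) (Hit s0 L) := by
  have h : ∀ i : S, ∃ r, 1 ≤ r ∧ ∃ δ : ℝ, 0 < δ ∧ ∃ X0, ∀ x, X0 ≤ x →
      ENNReal.ofReal δ ≤ X.P (x, i) (Hit s0 r) := by
    intro i
    obtain ⟨r, hr, f, hf0, hfr, hfstep⟩ := exists_path_to hQs hQi s0 i
    obtain ⟨δ, hδ, X0, hX0⟩ := hit_of_path X hp hCtop hC hQconv r hr f hfr hfstep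
    exact ⟨r, hr, δ, hδ, X0, by rw [← hf0]; exact hX0⟩
  choose r hr δ hδ X0 hX0 using h
  refine ⟨Finset.univ.sup r ⊔ 1, le_sup_right,
    Finset.univ.inf' Finset.univ_nonempty δ, ?_, Finset.univ.sup X0, ?_⟩
  · rw [Finset.lt_inf'_iff]
    exact fun i _ => hδ i
  · intro i x hx
    have h1 := hX0 i x (le_trans (Finset.le_sup (Finset.mem_univ i)) hx)
    refine le_trans (ENNReal.ofReal_le_ofReal (Finset.inf'_le _ (Finset.mem_univ i)))
      (le_trans h1 (measure_mono (Hit_mono ?_)))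
    exact le_trans (Finset.le_sup (Finset.mem_univ i)) le_sup_left

lemma hit_small (hirr : X.Irreducible) (s0 : S) (w : ℕ × S) :
    ∃ L, 1 ≤ L ∧ ∃ δ : ℝ, 0 < δ ∧ ENNReal.ofReal δ ≤ X.P w (Hit s0 L) := by
  have key : ∀ (u v : ℕ × S), u ≠ v → ∃ n, 1 ≤ n ∧ X.P u {ω | ω n = v} ≠ 0 := by
    intro u v huv
    obtain ⟨n, hn⟩ := hirr u v
    rcases Nat.eq_zero_or_pos n with h0 | h1
    · exfalso
      subst h0
      have hprob := X.isProb u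
      have hz : X.P u {ω | ω 0 = v} = 0 := by
        have hcompl : {ω : ℕ → ℕ × S | ω 0 = v} ⊆ {ω : ℕ → ℕ × S | ω 0 = u}ᶜ := by
          intro ω h hc
          rw [Set.mem_setOf_eq] at h hc
          exact huv (by rw [← hc, h])
        refine le_antisymm (le_trans (measure_mono hcompl) ?_) zero_le
        rw [measure_compl (measSet_eq 0 u) (measure_ne_top _ _), X.init u]
        simp
      exact hn hz
    · exact ⟨n, h1, hn⟩
  have hprobw := X.isProb w
  have hww' : w ≠ (w.1 + 1, w.2) := by
    intro h
    have := congrArg Prod.fst h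
    simp at this
  have hw'0 : ((w.1 + 1, w.2) : ℕ × S) ≠ (0, s0) := by
    intro h
    have := congrArg Prod.fst h
    simp at this
  obtain ⟨n1, hn1ge, hn1⟩ := key w (w.1 + 1, w.2) hww'
  obtain ⟨n2, hn2ge, hn2⟩ := key (w.1 + 1, w.2) (0, s0) hw'0
  have hchain := markov_univ X w (w.1 + 1, w.2) n1
    {ω' : ℕ → ℕ × S | ω' n2 = (0, s0)} (measSet_eq n2 (0, s0))
  have hpos : 0 < X.P w ({ω | ω n1 = (w.1 + 1, w.2)}
      ∩ {ω | (fun k => ω (n1 + k)) ∈ {ω' : ℕ → ℕ × S | ω' n2 = (0, s0)}}) := by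
    rw [hchain]
    exact ENNReal.mul_pos hn1 hn2
  have hsub : ({ω : ℕ → ℕ × S | ω n1 = (w.1 + 1, w.2)}
      ∩ {ω | (fun k => ω (n1 + k)) ∈ {ω' : ℕ → ℕ × S | ω' n2 = (0, s0)}}) ⊆ Hit s0 (n1 + n2) := by
    rintro ω ⟨_, h2⟩
    have h2' : ω (n1 + n2) = (0, s0) := h2
    exact ⟨n1 + n2, by omega, le_refl _, by rw [h2']⟩
  have hn0 : X.P w (Hit s0 (n1 + n2)) ≠ 0 :=
    ne_of_gt (lt_of_lt_of_le hpos (measure_mono hsub))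
  exact ⟨n1 + n2, by omega, (X.P w (Hit s0 (n1 + n2))).toReal,
    ENNReal.toReal_pos hn0 (measure_ne_top _ _), ENNReal.ofReal_toReal_le⟩

include hp hCtop hC hQconv in
lemma hit_uniform (hirr : X.Irreducible) (hQs : IsStochasticMatrix Q)
    (hQi : IsIrreducibleMatrix Q) :
    ∃ L, 1 ≤ L ∧ ∃ δ : ℝ, 0 < δ ∧ ∀ w : ℕ × S, ENNReal.ofReal δ ≤ X.P w (Hit s0 L) := by
  classical
  obtain ⟨L1, hL1, δ1, hδ1, X0, h1⟩ := hit_large X hp hCtop hC hQconv hQs hQi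
  choose Lf hLf δf hδf hPf using hit_small X hirr s0
  set T : Finset (ℕ × S) := Finset.range X0 ×ˢ Finset.univ with hT
  set δ2 : ℝ := if hTne : T.Nonempty then min δ1 (T.inf' hTne δf) else δ1 with hδ2
  have hδ2pos : 0 < δ2 := by
    rw [hδ2]
    split
    · rename_i hTne
      rw [lt_min_iff]
      exact ⟨hδ1, (Finset.lt_inf'_iff hTne).2 fun w _ => hδf w⟩
    · exact hδ1
  refine ⟨max L1 (T.sup Lf), le_trans hL1 (le_max_left _ _), δ2, hδ2pos, fun w => ?_⟩
  rcases lt_or_ge w.1 X0 with hw | hw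
  · have hwT : w ∈ T := by
      rw [hT, Finset.mem_product]
      exact ⟨Finset.mem_range.2 hw, Finset.mem_univ _⟩
    have hTne : T.Nonempty := ⟨w, hwT⟩
    have hd : δ2 ≤ δf w := by
      rw [hδ2, dif_pos hTne]
      exact le_trans (min_le_right _ _) (Finset.inf'_le _ hwT)
    refine le_trans (ENNReal.ofReal_le_ofReal hd)
      (le_trans (hPf w) (measure_mono (Hit_mono ?_)))
    exact le_trans (Finset.le_sup hwT) (le_max_right _ _)
  · have hd : δ2 ≤ δ1 := by
      rw [hδ2]
      split
      · exact min_le_left _ _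
      · exact le_refl _
    have h := h1 w.2 w.1 hw
    rw [Prod.mk.eta] at h
    exact le_trans (ENNReal.ofReal_le_ofReal hd)
      (le_trans h (measure_mono (Hit_mono (le_max_left _ _))))

end HitLemmas2
end Stmt18Aux

namespace Stmt18Aux
set_option linter.unusedSectionVars false

variable {S : Type*} [Fintype S] [DecidableEq S] [Nonempty S]
  [MeasurableSpace S] [MeasurableSingletonClass S]

/-- The no-visit event on the time window `[1, a]`. -/
def NoHit (s0 : S) (a : ℕ) : Set (ℕ → ℕ × S) := {ω | ∀ j, 1 ≤ j → j ≤ a → (ω j).2 ≠ s0}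

lemma noHit_eq_compl (s0 : S) (a : ℕ) : NoHit (S := S) s0 a = (Hit s0 a)ᶜ := by
  ext ω
  constructor
  · intro h hh
    obtain ⟨k, h1, h2, h3⟩ := hh
    exact h k h1 h2 h3
  · intro h j h1 h2 h3
    exact h ⟨j, h1, h2, h3⟩

lemma measSet_noHit (s0 : S) (a : ℕ) : MeasurableSet (NoHit (S := S) s0 a) := by
  rw [noHit_eq_compl]
  exact (measSet_hit s0 a).compl

section Geom
variable (X : MChain (ℕ × S)) {s0 : S} {L : ℕ} {δ : ℝ} (hδ : 0 < δ)
  (huni : ∀ w : ℕ × S, ENNReal.ofReal δ ≤ X.P w (Hit s0 L))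

include huni in
lemma noHit_one_le (w : ℕ × S) : X.P w (NoHit s0 L) ≤ 1 - ENNReal.ofReal δ := by
  have hprob := X.isProb w
  rw [noHit_eq_compl, prob_compl_eq_one_sub (measSet_hit s0 L)]
  exact tsub_le_tsub_left (huni w) 1

include huni in
lemma noHit_geom (z : ℕ × S) (k : ℕ) :
    X.P z (NoHit s0 (k * L)) ≤ (1 - ENNReal.ofReal δ) ^ k := by
  induction k generalizing z with
  | zero =>
    have hprob := X.isProb z
    simpa using prob_le_one
  | succ k IH =>
    have hsub : NoHit (S := S) s0 ((k + 1) * L)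
        ⊆ ⋃ w : ℕ × S, NoHit s0 (k * L) ∩ {ω | ω (k * L) = w}
            ∩ {ω | (fun j => ω (k * L + j)) ∈ NoHit s0 L} := by
      intro ω hω
      simp only [Set.mem_iUnion, Set.mem_inter_iff, Set.mem_setOf_eq]
      refine ⟨ω (k * L), ⟨?_, rfl⟩, ?_⟩
      · intro j h1 h2
        exact hω j h1 (le_trans h2 (by nlinarith [Nat.le_refl 1]))
      · intro j h1 h2
        exact hω (k * L + j) (by omega) (by nlinarith)
    refine le_trans (measure_mono hsub) ?_
    have hdep : ∀ ω ω' : ℕ → ℕ × S, (∀ j, j ≤ k * L → ω j = ω' j) →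
        ω ∈ NoHit (S := S) s0 (k * L) → ω' ∈ NoHit s0 (k * L) := by
      intro ω ω' hag hω j h1 h2
      rw [← hag j h2]
      exact hω j h1 h2
    have hle := decomp_le X z (k * L) (NoHit s0 (k * L)) (measSet_noHit s0 (k * L)) hdep
      (fun _ => NoHit s0 L) (fun _ => measSet_noHit s0 L)
      (1 - ENNReal.ofReal δ) (fun w => noHit_one_le X huni w)
    refine le_trans hle ?_
    rw [pow_succ]
    rw [mul_comm ((1 - ENNReal.ofReal δ) ^ k) (1 - ENNReal.ofReal δ)]
    exact mul_le_mul_right (IH z) _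

include huni in
lemma noHit_window (z : ℕ × S) (T k : ℕ) :
    X.P z {ω | ∀ j, 1 ≤ j → j ≤ k * L → (ω (T + j)).2 ≠ s0}
      ≤ (1 - ENNReal.ofReal δ) ^ k := by
  have hprob := X.isProb z
  have hsub : {ω : ℕ → ℕ × S | ∀ j, 1 ≤ j → j ≤ k * L → (ω (T + j)).2 ≠ s0}
      ⊆ ⋃ w : ℕ × S, Set.univ ∩ {ω | ω T = w}
          ∩ {ω | (fun j => ω (T + j)) ∈ NoHit s0 (k * L)} := by
    intro ω hω
    simp only [Set.mem_iUnion, Set.univ_inter, Set.mem_inter_iff, Set.mem_setOf_eq]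
    exact ⟨ω T, rfl, fun j h1 h2 => hω j h1 h2⟩
  refine le_trans (measure_mono hsub) ?_
  have hle := decomp_le X z T Set.univ MeasurableSet.univ (fun _ _ _ h => h)
    (fun _ => NoHit s0 (k * L)) (fun _ => measSet_noHit s0 (k * L))
    ((1 - ENNReal.ofReal δ) ^ k) (fun w => noHit_geom X huni w k)
  simpa [measure_univ] using hle

include hδ huni in
lemma io_as (hL : 1 ≤ L) (z : ℕ × S) :
    X.P z {ω | ¬ ∀ N : ℕ, ∃ k, N < k ∧ (ω k).2 = s0} = 0 := by
  have hβ : (1 - ENNReal.ofReal δ) < 1 :=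
    ENNReal.sub_lt_self ENNReal.one_ne_top one_ne_zero
      (by simp [ENNReal.ofReal_eq_zero, not_le, hδ])
  have htend : Tendsto (fun k : ℕ => (1 - ENNReal.ofReal δ) ^ k) atTop (nhds 0) :=
    ENNReal.tendsto_pow_atTop_nhds_zero_of_lt_one hβ
  have hsub : {ω : ℕ → ℕ × S | ¬ ∀ N : ℕ, ∃ k, N < k ∧ (ω k).2 = s0}
      ⊆ ⋃ N : ℕ, {ω | ∀ k, N < k → (ω k).2 ≠ s0} := by
    intro ω hω
    push_neg at hω
    obtain ⟨N, hN⟩ := hω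
    refine Set.mem_iUnion.2 ⟨N, fun k hk => ?_⟩
    exact hN k hk
  refine le_antisymm (le_trans (measure_mono hsub) ?_) zero_le
  rw [show (0 : ℝ≥0∞) = 0 from rfl]
  refine le_trans (measure_iUnion_le _) ?_
  have hzero : ∀ N : ℕ, X.P z {ω | ∀ k, N < k → (ω k).2 ≠ s0} = 0 := by
    intro N
    have hband : ∀ k : ℕ, X.P z {ω | ∀ k', N < k' → (ω k').2 ≠ s0}
        ≤ (1 - ENNReal.ofReal δ) ^ k := by
      intro k
      refine le_trans (measure_mono ?_) (noHit_window X huni z N k)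
      intro ω hω j h1 _
      exact hω (N + j) (by omega)
    exact le_antisymm (ge_of_tendsto htend (Filter.Eventually.of_forall hband)) zero_le
  simp [hzero]

end Geom
end Stmt18Aux

open Stmt18Aux in
/-- Lemma (discrepancy control): under (B_p) for some `p > 2` and (Q_∞),
`n^{-1/2} |X_n − X_{τ_{N(n)}}| → 0` in probability. -/
theorem stmt18 (X : MChain (ℕ × S)) (hirr : X.Irreducible) (s0 : S)
    (p : ℝ) (hp : 2 < p) (hB : CondB X p)
    (Q : S → S → ℝ) (pst : S → ℝ) (hQ : CondQ X Q) (hpst : IsStationaryDist Q pst) :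
    ∀ (z : ℕ × S) (ε : ℝ), 0 < ε →
      Tendsto (fun n : ℕ =>
          (X.P z {ω | ε * Real.sqrt n ≤
            (Nat.dist (ω n).1 (ω (tauSeq s0 ω (Ncount s0 n ω))).1 : ℝ)}).toReal)
        atTop (nhds 0) := by
  obtain ⟨C, hCtop, hC⟩ := hB
  have hp0 : (0:ℝ) < p := by linarith
  obtain ⟨hQconv, hQs, hQi⟩ := hQ
  intro z ε hε
  obtain ⟨L, hL1, δ, hδ, huni⟩ :=
    hit_uniform (s0 := s0) X hp0 hCtop hC hQconv hirr hQs hQi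
  have hio0 : X.P z {ω | ¬ ∀ N : ℕ, ∃ k, N < k ∧ (ω k).2 = s0} = 0 :=
    io_as X hδ huni hL1 z
  have key : Tendsto (fun n : ℕ => X.P z {ω | ε * Real.sqrt n ≤
      (Nat.dist (ω n).1 (ω (tauSeq s0 ω (Ncount s0 n ω))).1 : ℝ)}) atTop (nhds 0) := by
    rw [ENNReal.tendsto_nhds_zero]
    intro θ hθ
    rcases eq_or_ne θ ⊤ with hT | hT
    · exact Filter.Eventually.of_forall fun n => hT ▸ le_top
    have hθ2 : (0:ℝ≥0∞) < θ / 2 := ENNReal.div_pos (ne_of_gt hθ) (by norm_num)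
    have hβ : (1 - ENNReal.ofReal δ) < 1 :=
      ENNReal.sub_lt_self ENNReal.one_ne_top one_ne_zero
        (by simp [ENNReal.ofReal_eq_zero, not_le, hδ])
    obtain ⟨k, hk⟩ :=
      (((ENNReal.tendsto_pow_atTop_nhds_zero_of_lt_one hβ).eventually_lt_const hθ2)).exists
    rcases Nat.eq_zero_or_pos k with hk0 | hk1
    · -- k = 0 : already 1 < θ/2, so the probability bound is trivial
      subst hk0
      have hprob := X.isProb z
      refine Filter.Eventually.of_forall fun n => ?_
      have h1 : (1:ℝ≥0∞) < θ / 2 := by simpa using hk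
      have h2 : θ / 2 ≤ θ := ENNReal.half_le_self
      exact le_trans prob_le_one (le_trans h1.le h2)
    set m := k * L with hm
    have hm1 : 1 ≤ m := by
      have := Nat.mul_le_mul hk1 hL1
      simpa [hm] using this
    have hm0 : (0:ℝ) < m := by exact_mod_cast hm1
    -- the square-root expression tends to infinity
    have hsq : Tendsto (fun n : ℕ => (ε * Real.sqrt n / m) ^ p) atTop atTop := by
      have hsqrt : Tendsto Real.sqrt atTop atTop := by
        rw [Filter.tendsto_atTop]
        intro b
        filter_upwards [Filter.eventually_ge_atTop (b ^ 2)] with x hx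
        calc b ≤ |b| := le_abs_self b
          _ = Real.sqrt (b ^ 2) := (Real.sqrt_sq_eq_abs b).symm
          _ ≤ Real.sqrt x := Real.sqrt_le_sqrt hx
      have h1 : Tendsto (fun n : ℕ => Real.sqrt n) atTop atTop :=
        hsqrt.comp tendsto_natCast_atTop_atTop
      have h2 : Tendsto (fun n : ℕ => (ε / m) * Real.sqrt n) atTop atTop :=
        h1.const_mul_atTop (div_pos hε hm0)
      refine Tendsto.congr (fun n => ?_) ((tendsto_rpow_atTop hp0).comp h2)
      simp only [Function.comp_apply]
      rw [show (ε / m) * Real.sqrt n = ε * Real.sqrt n / m by ring]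
    -- the displacement bound tends to zero
    have hg : Tendsto (fun n : ℕ =>
        (m:ℝ≥0∞) * ((m:ℝ≥0∞) * (C / ENNReal.ofReal ((ε * Real.sqrt n / m) ^ p))))
        atTop (nhds 0) := by
      have hrw : (fun n : ℕ =>
          (m:ℝ≥0∞) * ((m:ℝ≥0∞) * (C / ENNReal.ofReal ((ε * Real.sqrt n / m) ^ p))))
          = fun n : ℕ =>
          ((m:ℝ≥0∞) * ((m:ℝ≥0∞) * C)) / ENNReal.ofReal ((ε * Real.sqrt n / m) ^ p) := by
        funext n
        rw [← mul_div_assoc, ← mul_div_assoc]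
      rw [hrw]
      set a : ℝ≥0∞ := (m:ℝ≥0∞) * ((m:ℝ≥0∞) * C) with ha
      have haT : a ≠ ⊤ :=
        ENNReal.mul_ne_top (ENNReal.natCast_ne_top m)
          (ENNReal.mul_ne_top (ENNReal.natCast_ne_top m) hCtop)
      rw [ENNReal.tendsto_nhds_zero]
      intro θ' hθ'
      rcases eq_or_ne θ' ⊤ with h' | h'
      · exact Filter.Eventually.of_forall fun n => h' ▸ le_top
      have hfin : a / θ' ≠ ⊤ := by
        simp [ENNReal.div_eq_top, haT, ne_of_gt hθ']
      set R : ℝ := (a / θ').toReal + 1 with hR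
      have hR1 : (1:ℝ) ≤ R := by
        rw [hR]
        have := ENNReal.toReal_nonneg (a := a / θ')
        linarith
      filter_upwards [hsq.eventually_ge_atTop R] with n hn
      have h0R : (0:ℝ) < R := by rw [hR]; positivity
      have hne0 : ENNReal.ofReal ((ε * Real.sqrt n / m) ^ p) ≠ 0 := by
        simp only [ne_eq, ENNReal.ofReal_eq_zero, not_le]
        exact lt_of_lt_of_le h0R hn
      rw [ENNReal.div_le_iff_le_mul (Or.inl hne0) (Or.inl ENNReal.ofReal_ne_top)]
      calc a = θ' * (a / θ') := (ENNReal.mul_div_cancel (ne_of_gt hθ') h').symm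
        _ ≤ θ' * ENNReal.ofReal R := by
            refine mul_le_mul_right ?_ _
            rw [← ENNReal.ofReal_toReal hfin]
            exact ENNReal.ofReal_le_ofReal (by rw [hR]; linarith)
        _ ≤ θ' * ENNReal.ofReal ((ε * Real.sqrt n / m) ^ p) :=
            mul_le_mul_right (ENNReal.ofReal_le_ofReal hn) _
    filter_upwards [hg.eventually_lt_const hθ2, Filter.eventually_ge_atTop (max m 1)]
      with n hgn hn
    have hn1 : 1 ≤ n := le_trans (le_max_right _ _) hn
    have hmn : m ≤ n := le_trans (le_max_left _ _) hn
    have ht : (0:ℝ) < ε * Real.sqrt n :=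
      mul_pos hε (Real.sqrt_pos.2 (by exact_mod_cast Nat.pos_of_ne_zero (by omega)))
    -- master inclusion
    have hincl : {ω : ℕ → ℕ × S | ε * Real.sqrt n ≤
          (Nat.dist (ω n).1 (ω (tauSeq s0 ω (Ncount s0 n ω))).1 : ℝ)}
        ⊆ {ω : ℕ → ℕ × S | ∀ j, 1 ≤ j → j ≤ k * L → (ω (n - k * L + j)).2 ≠ s0}
          ∪ ({ω : ℕ → ℕ × S | ¬ ∀ N : ℕ, ∃ k', N < k' ∧ (ω k').2 = s0}
          ∪ ⋃ j ∈ Finset.range m,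
              {ω : ℕ → ℕ × S | ε * Real.sqrt n ≤ (Nat.dist (ω n).1 (ω (n - j)).1 : ℝ)}) := by
      intro ω hA
      by_cases hW : ω ∈ {ω : ℕ → ℕ × S | ∀ j, 1 ≤ j → j ≤ k * L → (ω (n - k * L + j)).2 ≠ s0}
      · exact Or.inl hW
      by_cases hBad : ∀ N : ℕ, ∃ k', N < k' ∧ (ω k').2 = s0
      · refine Or.inr (Or.inr ?_)
        simp only [Set.mem_setOf_eq] at hW
        push_neg at hW
        obtain ⟨j, hj1, hj2, hj3⟩ := hW
        have hmm : k * L = m := rfl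
        have htw := tau_window (s0 := s0) (ω := ω) hBad
          (a := n - k * L) (n := n) (t := n - k * L + j) (by omega) (by omega) hj3
        obtain ⟨hτ1, hτ2⟩ := htw
        refine Set.mem_biUnion
          (Finset.mem_range.2 (show n - tauSeq s0 ω (Ncount s0 n ω) < m by omega)) ?_
        show ε * Real.sqrt n
          ≤ (Nat.dist (ω n).1 (ω (n - (n - tauSeq s0 ω (Ncount s0 n ω)))).1 : ℝ)
        rw [show n - (n - tauSeq s0 ω (Ncount s0 n ω)) = tauSeq s0 ω (Ncount s0 n ω) by omega]
        exact hA
      · exact Or.inr (Or.inl hBad)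
    have hUle : X.P z (⋃ j ∈ Finset.range m,
        {ω : ℕ → ℕ × S | ε * Real.sqrt n ≤ (Nat.dist (ω n).1 (ω (n - j)).1 : ℝ)})
        ≤ (m:ℝ≥0∞) * ((m:ℝ≥0∞) * (C / ENNReal.ofReal ((ε * Real.sqrt n / m) ^ p))) := by
      refine le_trans (measure_biUnion_finset_le _ _) ?_
      have hterm : ∀ j ∈ Finset.range m,
          X.P z {ω : ℕ → ℕ × S | ε * Real.sqrt n ≤ (Nat.dist (ω n).1 (ω (n - j)).1 : ℝ)}
            ≤ (m:ℝ≥0∞) * (C / ENNReal.ofReal ((ε * Real.sqrt n / m) ^ p)) := by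
        intro j hj
        rcases Nat.eq_zero_or_pos j with h0 | h1
        · subst h0
          have hD0 : {ω : ℕ → ℕ × S | ε * Real.sqrt n
              ≤ (Nat.dist (ω n).1 (ω (n - 0)).1 : ℝ)} = ∅ := by
            ext ω
            simp only [Nat.sub_zero, Nat.dist_self, Nat.cast_zero, Set.mem_setOf_eq,
              Set.mem_empty_iff_false, iff_false, not_le]
            exact ht
          rw [hD0]
          simp
        · have hjm : j < m := Finset.mem_range.1 hj
          have hjn : j ≤ n := le_trans (le_of_lt hjm) hmn
          refine le_trans (cheb_displacement X hp0 hC z n j h1 hjn ht) ?_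
          refine mul_le_mul (by exact_mod_cast le_of_lt hjm) ?_ zero_le zero_le
          refine ENNReal.div_le_div_left (ENNReal.ofReal_le_ofReal ?_) C
          have hj0 : (0:ℝ) < j := by exact_mod_cast h1
          have hjm' : (j:ℝ) ≤ m := by exact_mod_cast le_of_lt hjm
          refine Real.rpow_le_rpow (div_nonneg ht.le hm0.le) ?_ hp0.le
          exact div_le_div_of_nonneg_left ht.le hj0 hjm'
      refine le_trans (Finset.sum_le_card_nsmul _ _ _ hterm) ?_
      rw [Finset.card_range, nsmul_eq_mul]
    calc X.P z {ω | ε * Real.sqrt n ≤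
          (Nat.dist (ω n).1 (ω (tauSeq s0 ω (Ncount s0 n ω))).1 : ℝ)}
        ≤ X.P z ({ω : ℕ → ℕ × S | ∀ j, 1 ≤ j → j ≤ k * L → (ω (n - k * L + j)).2 ≠ s0}
            ∪ ({ω : ℕ → ℕ × S | ¬ ∀ N : ℕ, ∃ k', N < k' ∧ (ω k').2 = s0}
            ∪ ⋃ j ∈ Finset.range m,
              {ω : ℕ → ℕ × S | ε * Real.sqrt n ≤ (Nat.dist (ω n).1 (ω (n - j)).1 : ℝ)})) :=
          measure_mono hincl
      _ ≤ X.P z {ω : ℕ → ℕ × S | ∀ j, 1 ≤ j → j ≤ k * L → (ω (n - k * L + j)).2 ≠ s0}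
            + X.P z ({ω : ℕ → ℕ × S | ¬ ∀ N : ℕ, ∃ k', N < k' ∧ (ω k').2 = s0}
            ∪ ⋃ j ∈ Finset.range m,
              {ω : ℕ → ℕ × S | ε * Real.sqrt n ≤ (Nat.dist (ω n).1 (ω (n - j)).1 : ℝ)}) :=
          measure_union_le _ _
      _ ≤ (1 - ENNReal.ofReal δ) ^ k
            + (X.P z {ω : ℕ → ℕ × S | ¬ ∀ N : ℕ, ∃ k', N < k' ∧ (ω k').2 = s0}
            + X.P z (⋃ j ∈ Finset.range m,
              {ω : ℕ → ℕ × S | ε * Real.sqrt n ≤ (Nat.dist (ω n).1 (ω (n - j)).1 : ℝ)})) :=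
          add_le_add (noHit_window X huni z (n - k * L) k) (measure_union_le _ _)
      _ ≤ θ / 2 + (0 + θ / 2) :=
          add_le_add hk.le (add_le_add (le_of_eq hio0) (le_trans hUle hgn.le))
      _ = θ := by rw [zero_add]; exact ENNReal.add_halves θ
  have htoReal : Tendsto ENNReal.toReal (nhds 0) (nhds (0:ℝ≥0∞).toReal) :=
    ENNReal.tendsto_toReal (by simp)
  simpa [Function.comp_def] using htoReal.comp key
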